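/- Let d > 0 be a real number and let v : ℝ → ℝ be continuously differentiable with v² and (v')² integrable on ℝ and v(ξ) → 0 as ξ → +∞. Then for every x ∈ ℝ: (1/√d)·e^{x/√d} ∫_x^{+∞} e^{−ξ/√d}·( v(ξ)²/d + v'(ξ)²/2 ) dξ ≥ v(x)²/(2d). -/

import Mathlib

open MeasureTheory Filter Set Real

/-- **The convolution estimate `F(w,V) ≥ w²/2` of the blow-up proof** (with `w = v/√d`,
`V = v'`): for `v` continuously differentiable with `v²`, `(v')²` integrable and
`v(ξ) → 0` as `ξ → +∞`,
`(1/√d) e^{x/√d} ∫_x^∞ e^{-ξ/√d} (v²/d + v'²/2) dξ ≥ v(x)²/(2d)`. -/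
theorem F_lower_bound (d : ℝ) (hd : 0 < d) (v : ℝ → ℝ) (hv : ContDiff ℝ 1 v)
    (h2 : MeasureTheory.Integrable (fun ξ => (v ξ) ^ 2))
    (h2' : MeasureTheory.Integrable (fun ξ => (deriv v ξ) ^ 2))
    (hlim : Filter.Tendsto v Filter.atTop (nhds 0)) (x : ℝ) :
    (1 / Real.sqrt d) * Real.exp (x / Real.sqrt d)
      * (∫ ξ in Set.Ioi x,
          Real.exp (-ξ / Real.sqrt d) * ((v ξ) ^ 2 / d + (deriv v ξ) ^ 2 / 2))
      ≥ (v x) ^ 2 / (2 * d) := by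
  set s := Real.sqrt d with hs_def
  have hs : 0 < s := Real.sqrt_pos.mpr hd
  have hs2 : s ^ 2 = d := Real.sq_sqrt hd.le
  have hvc : Continuous v := hv.continuous
  have hvc' : Continuous (deriv v) := hv.continuous_deriv le_rfl
  have hvd : ∀ ξ : ℝ, HasDerivAt v (deriv v ξ) ξ := fun ξ =>
    (hv.differentiable one_ne_zero ξ).hasDerivAt
  -- the auxiliary function g and its derivative
  set g : ℝ → ℝ := fun ξ => Real.exp ((x - ξ) / s) * v ξ ^ 2 with hg_def
  set g' : ℝ → ℝ := fun ξ =>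
    Real.exp ((x - ξ) / s) * (2 * v ξ * deriv v ξ - v ξ ^ 2 / s) with hg'_def
  have hgd : ∀ ξ : ℝ, HasDerivAt g (g' ξ) ξ := by
    intro ξ
    have h1 : HasDerivAt (fun ξ : ℝ => Real.exp ((x - ξ) / s))
        (Real.exp ((x - ξ) / s) * (-(1 / s))) ξ := by
      have hlin : HasDerivAt (fun ξ : ℝ => (x - ξ) / s) (-(1 / s)) ξ := by
        have := ((hasDerivAt_id ξ).const_sub x).div_const s
        simpa [neg_div] using this
      simpa using hlin.exp
    have h2v : HasDerivAt (fun ξ : ℝ => v ξ ^ 2) (2 * v ξ * deriv v ξ) ξ := by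
      have := (hvd ξ).fun_pow 2
      simpa [mul_comm, mul_assoc, mul_left_comm] using this
    have := h1.fun_mul h2v
    refine this.congr_deriv ?_
    show _ = Real.exp ((x - ξ) / s) * (2 * v ξ * deriv v ξ - v ξ ^ 2 / s)
    ring
  have hg'cont : Continuous g' := by
    apply Continuous.mul
    · exact (((continuous_const.sub continuous_id).div_const s).rexp)
    · exact ((continuous_const.mul hvc).mul hvc').sub ((hvc.pow 2).div_const s)
  -- g tends to 0 at +∞
  have hgtend : Tendsto g atTop (nhds 0) := by
    have he : Tendsto (fun ξ : ℝ => Real.exp ((x - ξ) / s)) atTop (nhds 0) := by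
      have h1 : Tendsto (fun ξ : ℝ => (x - ξ) / s) atTop atBot := by
        have := (tendsto_atBot_add_const_left atTop x
          tendsto_neg_atTop_atBot).atBot_div_const hs
        simpa [sub_eq_add_neg] using this
      exact Real.tendsto_exp_atBot.comp h1
    have hv2 : Tendsto (fun ξ => v ξ ^ 2) atTop (nhds 0) := by
      have := hlim.mul hlim
      simpa [pow_two] using this
    simpa using he.mul hv2
  -- integrability of g' on Ioi x
  have hsum : Integrable (fun ξ => v ξ ^ 2 + (deriv v ξ) ^ 2) := h2.add h2'
  have hg'int : IntegrableOn g' (Set.Ioi x) := by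
    apply Integrable.mono' (((hsum.const_mul (1 + 1 / s))).restrict)
      (hg'cont.aestronglyMeasurable.restrict)
    filter_upwards [ae_restrict_mem measurableSet_Ioi] with ξ hξ
    have hξx : x < ξ := hξ
    have he1 : Real.exp ((x - ξ) / s) ≤ 1 := by
      rw [Real.exp_le_one_iff]
      apply div_nonpos_of_nonpos_of_nonneg (by linarith) hs.le
    have he0 : (0:ℝ) < Real.exp ((x - ξ) / s) := Real.exp_pos _
    have h1 : |2 * v ξ * deriv v ξ| ≤ v ξ ^ 2 + (deriv v ξ) ^ 2 := by
      rw [abs_le]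
      constructor <;>
        nlinarith [sq_nonneg (v ξ + deriv v ξ), sq_nonneg (v ξ - deriv v ξ)]
    have habs : |g' ξ| ≤ |2 * v ξ * deriv v ξ - v ξ ^ 2 / s| := by
      simp only [hg'_def, abs_mul, abs_of_pos he0]
      nlinarith [abs_nonneg (2 * v ξ * deriv v ξ - v ξ ^ 2 / s)]
    have hb : |2 * v ξ * deriv v ξ - v ξ ^ 2 / s|
        ≤ (1 + 1 / s) * (v ξ ^ 2 + (deriv v ξ) ^ 2) := by
      have h2a : 0 ≤ v ξ ^ 2 / s := div_nonneg (sq_nonneg _) hs.le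
      have hb2 : v ξ ^ 2 / s ≤ (1 / s) * (v ξ ^ 2 + (deriv v ξ) ^ 2) := by
        rw [one_div, inv_mul_eq_div]
        gcongr
        nlinarith [sq_nonneg (deriv v ξ)]
      rw [abs_sub_le_iff]
      refine ⟨?_, ?_⟩
      · have := (abs_le.mp h1).2
        nlinarith
      · have := (abs_le.mp h1).1
        nlinarith
    calc ‖g' ξ‖ = |g' ξ| := rfl
      _ ≤ (1 + 1 / s) * (v ξ ^ 2 + (deriv v ξ) ^ 2) := habs.trans hb
  -- fundamental theorem: ∫_Ioi x g' = -g x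
  have hFTC : ∫ ξ in Set.Ioi x, g' ξ = 0 - g x :=
    integral_Ioi_of_hasDerivAt_of_tendsto
      ((((continuous_const.sub continuous_id).div_const s).rexp.mul
        (hvc.pow 2)).continuousWithinAt)
      (fun ξ _ => hgd ξ) hg'int hgtend
  have hgx : g x = v x ^ 2 := by simp [hg_def]
  -- the integrand of the goal, with constants pushed inside
  set F : ℝ → ℝ := fun ξ =>
    (1 / s * Real.exp (x / s)) *
      (Real.exp (-ξ / s) * (v ξ ^ 2 / d + (deriv v ξ) ^ 2 / 2)) with hF_def
  have hFint : IntegrableOn F (Set.Ioi x) := by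
    apply Integrable.const_mul
    apply Integrable.mono'
      ((((h2.div_const d).add (h2'.div_const 2)).const_mul (Real.exp (-x / s))).restrict)
    · exact ((continuous_neg.div_const s).rexp.mul
        (((hvc.pow 2).div_const d).add
          ((hvc'.pow 2).div_const 2))).aestronglyMeasurable.restrict
    · filter_upwards [ae_restrict_mem measurableSet_Ioi] with ξ hξ
      have hξx : x < ξ := hξ
      have he : Real.exp (-ξ / s) ≤ Real.exp (-x / s) := by
        apply Real.exp_le_exp.mpr
        gcongr
      have hnn : 0 ≤ v ξ ^ 2 / d + (deriv v ξ) ^ 2 / 2 := by positivity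
      rw [Real.norm_eq_abs, abs_of_nonneg (mul_nonneg (Real.exp_pos _).le hnn)]
      exact mul_le_mul_of_nonneg_right he hnn
  -- pointwise inequality
  have hpt : ∀ ξ : ℝ, -(1 / (2 * d)) * g' ξ ≤ F ξ := by
    intro ξ
    have hepos : (0:ℝ) < Real.exp ((x - ξ) / s) := Real.exp_pos _
    have hexp : Real.exp (x / s) * Real.exp (-ξ / s) = Real.exp ((x - ξ) / s) := by
      rw [← Real.exp_add]; congr 1; ring
    have hdiff : F ξ - (-(1 / (2 * d)) * g' ξ)
        = Real.exp ((x - ξ) / s) / (2 * s ^ 3) * (v ξ + s * deriv v ξ) ^ 2 := by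
      simp only [hF_def, hg'_def, ← hs2]
      rw [show (1 / s * Real.exp (x / s)) *
          (Real.exp (-ξ / s) * (v ξ ^ 2 / s ^ 2 + (deriv v ξ) ^ 2 / 2))
          = (Real.exp (x / s) * Real.exp (-ξ / s)) *
            (1 / s * (v ξ ^ 2 / s ^ 2 + (deriv v ξ) ^ 2 / 2)) by ring, hexp]
      field_simp
      try ring
    nlinarith [mul_nonneg (div_nonneg hepos.le (by positivity : (0:ℝ) ≤ 2 * s ^ 3))
      (sq_nonneg (v ξ + s * deriv v ξ))]
  have hGint : IntegrableOn (fun ξ => -(1 / (2 * d)) * g' ξ) (Set.Ioi x) :=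
    hg'int.const_mul _
  have hmono : (∫ ξ in Set.Ioi x, -(1 / (2 * d)) * g' ξ) ≤ ∫ ξ in Set.Ioi x, F ξ :=
    integral_mono hGint hFint fun ξ => hpt ξ
  have hleft : (∫ ξ in Set.Ioi x, -(1 / (2 * d)) * g' ξ) = v x ^ 2 / (2 * d) := by
    rw [MeasureTheory.integral_const_mul, hFTC, hgx]; ring
  have hright : (∫ ξ in Set.Ioi x, F ξ)
      = 1 / s * Real.exp (x / s) *
        ∫ ξ in Set.Ioi x, Real.exp (-ξ / s) * (v ξ ^ 2 / d + (deriv v ξ) ^ 2 / 2) := by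
    rw [hF_def, MeasureTheory.integral_const_mul]
  calc (v x) ^ 2 / (2 * d) = ∫ ξ in Set.Ioi x, -(1 / (2 * d)) * g' ξ := hleft.symm
    _ ≤ ∫ ξ in Set.Ioi x, F ξ := hmono
    _ = _ := hright
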